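/- arXiv:1910.10774 — 2 statements merged into one kernel-verified Lean document; each statement's English description precedes it below -/
import Mathlib

section
/- Let X be a real Banach space and (a_n)_{n<ω} a normalized sequence in X. Suppose that every sequence (b_m)_{m<ω} of normalized blocks of (a_n) is isometrically equivalent to (a_n), i.e., for every such (b_m), every k < ω, and every c ∈ ℝ^k, ‖Σ_{m<k} c_m b_m‖ = ‖Σ_{m<k} c_m a_m‖. Then either there exists p with 1 ≤ p < ∞ such that (a_n) is isometric to the standard basis of ℓ_p, or (a_n) is isometric to the standard basis of c_0. -/
open Finset

/-- `b` is a normalized block of the sequence `a`: `b = ∑_{i<k} r i • a (n+i)` with `‖b‖ = 1`. -/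
def IsNormalizedBlock {X : Type*} [NormedAddCommGroup X] [NormedSpace ℝ X]
    (a : ℕ → X) (b : X) : Prop :=
  ∃ (n k : ℕ) (r : ℕ → ℝ),
    b = ∑ i ∈ Finset.range k, r i • a (n + i) ∧ ‖b‖ = 1

/-- `b` is a sequence of normalized blocks of `a` with successive index ranges. -/
def IsNormalizedBlockSeq {X : Type*} [NormedAddCommGroup X] [NormedSpace ℝ X]
    (a b : ℕ → X) : Prop :=
  ∃ (n k : ℕ → ℕ) (r : ℕ → ℕ → ℝ),
    (∀ m, b m = ∑ i ∈ Finset.range (k m), r m i • a (n m + i)) ∧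
    (∀ m, ‖b m‖ = 1) ∧
    (∀ m, n m + k m ≤ n (m + 1))

/-- `a` is isometric (1-equivalent) to the standard basis of `ℓ_p`. -/
def IsometricLpBasis {X : Type*} [NormedAddCommGroup X] [NormedSpace ℝ X]
    (p : ℝ) (a : ℕ → X) : Prop :=
  ∀ (k : ℕ) (r : ℕ → ℝ),
    ‖∑ i ∈ Finset.range k, r i • a i‖ =
      (∑ i ∈ Finset.range k, |r i| ^ p) ^ (1 / p)

/-- `a` is isometric (1-equivalent) to the standard basis of `c₀`. -/
def IsometricC0Basis {X : Type*} [NormedAddCommGroup X] [NormedSpace ℝ X]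
    (a : ℕ → X) : Prop :=
  ∀ (k : ℕ) (hk : k ≠ 0) (r : ℕ → ℝ),
    ‖∑ i ∈ Finset.range k, r i • a i‖ =
      (Finset.range k).sup' (Finset.nonempty_range_iff.mpr hk) (fun i => |r i|)

set_option linter.unreachableTactic false
set_option linter.unusedTactic false
set_option linter.unusedSectionVars false

section Dev
variable {X : Type*} [NormedAddCommGroup X] [NormedSpace ℝ X]
variable {a : ℕ → X}

/-- Finite version of the block hypothesis. -/
theorem block_finite (ha : ∀ n, ‖a n‖ = 1)
    (hblock : ∀ b : ℕ → X, IsNormalizedBlockSeq a b →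
      ∀ (k : ℕ) (c : ℕ → ℝ),
        ‖∑ m ∈ Finset.range k, c m • b m‖ = ‖∑ m ∈ Finset.range k, c m • a m‖)
    (K : ℕ) (n k : ℕ → ℕ) (r : ℕ → ℕ → ℝ)
    (hsucc : ∀ m, m + 1 < K → n m + k m ≤ n (m+1))
    (hnorm : ∀ m, m < K → ‖∑ i ∈ range (k m), r m i • a (n m + i)‖ = 1)
    (c : ℕ → ℝ) :
    ‖∑ m ∈ range K, c m • (∑ i ∈ range (k m), r m i • a (n m + i))‖
      = ‖∑ m ∈ range K, c m • a m‖ := by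
  classical
  set M : ℕ := if K = 0 then 0 else n (K-1) + k (K-1) with hM
  set n' : ℕ → ℕ := fun m => if m < K then n m else M + (m - K) with hn'
  set k' : ℕ → ℕ := fun m => if m < K then k m else 1 with hk'
  set r' : ℕ → ℕ → ℝ := fun m => if m < K then r m else fun _ => 1 with hr'
  set b : ℕ → X := fun m => ∑ i ∈ range (k' m), r' m i • a (n' m + i) with hb
  have hbs : IsNormalizedBlockSeq a b := by
    refine ⟨n', k', r', fun m => rfl, ?_, ?_⟩
    · intro m
      by_cases hm : m < K
      · simp only [hb, hn', hk', hr', if_pos hm]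
        exact hnorm m hm
      · simp only [hb, hn', hk', hr', if_neg hm]
        simp [ha]
    · intro m
      by_cases hm : m + 1 < K
      · have hm' : m < K := Nat.lt_of_succ_lt hm
        simp only [hn', hk', if_pos hm, if_pos hm']
        exact hsucc m hm
      · by_cases hm' : m < K
        · -- m = K - 1, m + 1 = K
          have hK : K ≠ 0 := by omega
          have hmeq : m = K - 1 := by omega
          simp only [hn', hk', if_pos hm', if_neg hm, hM, if_neg hK]
          rw [hmeq]
          omega
        · simp only [hn', hk', if_neg hm, if_neg hm']
          omega
  have := hblock b hbs K c
  rw [← this]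
  congr 1
  refine Finset.sum_congr rfl fun m hm => ?_
  have hm' : m < K := Finset.mem_range.mp hm
  simp only [hb, hn', hk', hr', if_pos hm']
end Dev
section Dev2
variable {X : Type*} [NormedAddCommGroup X] [NormedSpace ℝ X]
variable {a : ℕ → X}

theorem sign_inv (ha : ∀ n, ‖a n‖ = 1)
    (hblock : ∀ b : ℕ → X, IsNormalizedBlockSeq a b →
      ∀ (k : ℕ) (c : ℕ → ℝ),
        ‖∑ m ∈ Finset.range k, c m • b m‖ = ‖∑ m ∈ Finset.range k, c m • a m‖)
    (K : ℕ) (ε : ℕ → ℝ) (hε : ∀ m, |ε m| = 1) (c : ℕ → ℝ) :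
    ‖∑ m ∈ range K, (ε m * c m) • a m‖ = ‖∑ m ∈ range K, c m • a m‖ := by
  have h := block_finite ha hblock K (fun m => m) (fun _ => 1) (fun m _ => ε m)
    (by intro m _; omega)
    (by intro m _; simp [norm_smul, Real.norm_eq_abs, hε, ha]) c
  rw [← h]
  congr 1
  refine Finset.sum_congr rfl fun m _ => ?_
  simp [smul_smul, mul_comm]

theorem shift_inv (ha : ∀ n, ‖a n‖ = 1)
    (hblock : ∀ b : ℕ → X, IsNormalizedBlockSeq a b →
      ∀ (k : ℕ) (c : ℕ → ℝ),
        ‖∑ m ∈ Finset.range k, c m • b m‖ = ‖∑ m ∈ Finset.range k, c m • a m‖)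
    (t K : ℕ) (c : ℕ → ℝ) :
    ‖∑ m ∈ range K, c m • a (t + m)‖ = ‖∑ m ∈ range K, c m • a m‖ := by
  have h := block_finite ha hblock K (fun m => t + m) (fun _ => 1) (fun _ _ => 1)
    (by intro m _; omega)
    (by intro m _; simp [ha]) c
  rw [← h]
  congr 1
  refine Finset.sum_congr rfl fun m _ => ?_
  simp

theorem mono_norm (ha : ∀ n, ‖a n‖ = 1)
    (hblock : ∀ b : ℕ → X, IsNormalizedBlockSeq a b →
      ∀ (k : ℕ) (c : ℕ → ℝ),
        ‖∑ m ∈ Finset.range k, c m • b m‖ = ‖∑ m ∈ Finset.range k, c m • a m‖)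
    (K : ℕ) (c d : ℕ → ℝ) (hcd : ∀ i, |c i| ≤ |d i|) :
    ‖∑ m ∈ range K, c m • a m‖ ≤ ‖∑ m ∈ range K, d m • a m‖ := by
  classical
  -- single coordinate substitution
  have key : ∀ (u : ℕ → ℝ) (j : ℕ), j < K → |c j| ≤ |u j| →
      ‖∑ m ∈ range K, (fun i => if i = j then c j else u i) m • a m‖
        ≤ ‖∑ m ∈ range K, u m • a m‖ := by
    intro u j hj hcu
    by_cases hdj : u j = 0
    · have hcj : c j = 0 := by
        have := hcu; rw [hdj, abs_zero] at this
        exact abs_eq_zero.mp (le_antisymm this (abs_nonneg _))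
      refine le_of_eq ?_
      congr 1
      refine Finset.sum_congr rfl fun m _ => ?_
      by_cases hmj : m = j <;> simp [hmj, hcj, hdj]
    · set θ : ℝ := c j / u j with hθ
      have hθ1 : |θ| ≤ 1 := by
        rw [hθ, abs_div]
        exact div_le_one_of_le₀ hcu (abs_nonneg _)
      have hcθ : c j = θ * u j := by rw [hθ]; exact (div_mul_cancel₀ _ hdj).symm
      set S : X := ∑ m ∈ (range K).erase j, u m • a m with hS
      have hsplit : ∀ v : ℝ, ∑ m ∈ range K, (fun i => if i = j then v else u i) m • a m
          = S + v • a j := by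
        intro v
        rw [hS, ← Finset.sum_erase_add _ _ (Finset.mem_range.mpr hj)]
        congr 1
        · refine Finset.sum_congr rfl fun m hm => ?_
          have : m ≠ j := (Finset.mem_erase.mp hm).1
          simp [this]
        · simp
      have husum : ∑ m ∈ range K, u m • a m = S + u j • a j := by
        have := hsplit (u j)
        rw [← this]
        refine Finset.sum_congr rfl fun m _ => ?_
        by_cases hmj : m = j <;> simp [hmj]
      -- flip the sign at j
      have hflip : ‖S - u j • a j‖ = ‖S + u j • a j‖ := by
        have h := sign_inv ha hblock K (fun i => if i = j then (-1 : ℝ) else 1)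
          (by intro m; by_cases h : m = j <;> simp [h]) u
        rw [husum] at h
        rw [← h]
        congr 1
        rw [sub_eq_add_neg, hS, ← Finset.sum_erase_add _ _ (Finset.mem_range.mpr hj)]
        congr 1
        · refine Finset.sum_congr rfl fun m hm => ?_
          have : m ≠ j := (Finset.mem_erase.mp hm).1
          simp [this]
        · simp
      -- convexity
      have hid : S + (θ * u j) • a j
          = ((1+θ)/2) • (S + u j • a j) + ((1-θ)/2) • (S - u j • a j) := by
        module
      rw [hsplit (c j), hcθ, husum, hid]
      calc ‖((1+θ)/2) • (S + u j • a j) + ((1-θ)/2) • (S - u j • a j)‖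
          ≤ ‖((1+θ)/2) • (S + u j • a j)‖ + ‖((1-θ)/2) • (S - u j • a j)‖ := norm_add_le _ _
        _ = ((1+θ)/2) * ‖S + u j • a j‖ + ((1-θ)/2) * ‖S + u j • a j‖ := by
            rw [norm_smul, norm_smul, hflip, Real.norm_eq_abs, Real.norm_eq_abs,
              abs_of_nonneg (by cases abs_le.mp hθ1; linarith),
              abs_of_nonneg (by cases abs_le.mp hθ1; linarith)]
        _ = ‖S + u j • a j‖ := by ring
  -- iterate over coordinates
  have main : ∀ j : ℕ,
      ‖∑ m ∈ range K, (fun i => if i < j then c i else d i) m • a m‖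
        ≤ ‖∑ m ∈ range K, d m • a m‖ := by
    intro j
    induction j with
    | zero => simp
    | succ j ih =>
      by_cases hj : j < K
      · calc ‖∑ m ∈ range K, (fun i => if i < j + 1 then c i else d i) m • a m‖
            = ‖∑ m ∈ range K, (fun i => if i = j then c j
                else (if i < j then c i else d i)) m • a m‖ := by
              congr 1
              refine Finset.sum_congr rfl fun m _ => ?_
              by_cases h1 : m = j
              · simp [h1]
              · by_cases h2 : m < j <;> simp [h1, h2, Nat.lt_succ_iff_lt_or_eq] <;> omega
          _ ≤ ‖∑ m ∈ range K, (fun i => if i < j then c i else d i) m • a m‖ := by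
              refine key _ j hj ?_
              simpa using hcd j
          _ ≤ _ := ih
      · calc ‖∑ m ∈ range K, (fun i => if i < j + 1 then c i else d i) m • a m‖
            = ‖∑ m ∈ range K, (fun i => if i < j then c i else d i) m • a m‖ := by
              congr 1
              refine Finset.sum_congr rfl fun m hm => ?_
              have hmK : m < K := Finset.mem_range.mp hm
              have h1 : m < j + 1 := by omega
              have h2 : m < j := by omega
              simp [h1, h2]
          _ ≤ _ := ih
  have := main K
  calc ‖∑ m ∈ range K, c m • a m‖
      = ‖∑ m ∈ range K, (fun i => if i < K then c i else d i) m • a m‖ := by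
        congr 1
        refine Finset.sum_congr rfl fun m hm => ?_
        simp [Finset.mem_range.mp hm]
    _ ≤ _ := main K
end Dev2

section Dev3
variable {X : Type*} [NormedAddCommGroup X] [NormedSpace ℝ X]
variable {a : ℕ → X}

theorem sum_grid {M : Type*} [AddCommMonoid M] (f : ℕ → M) (m n : ℕ) :
    ∑ m' ∈ range m, ∑ i ∈ range n, f (m' * n + i) = ∑ j ∈ range (m * n), f j := by
  induction m with
  | zero => simp
  | succ m ih =>
    rw [Finset.sum_range_succ, ih, Nat.succ_mul, Finset.sum_range_add]

theorem one_le_lam (ha : ∀ n, ‖a n‖ = 1)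
    (hblock : ∀ b : ℕ → X, IsNormalizedBlockSeq a b →
      ∀ (k : ℕ) (c : ℕ → ℝ),
        ‖∑ m ∈ Finset.range k, c m • b m‖ = ‖∑ m ∈ Finset.range k, c m • a m‖)
    (n : ℕ) (hn : n ≠ 0) : 1 ≤ ‖∑ i ∈ range n, a i‖ := by
  classical
  have h := mono_norm ha hblock n (fun i => if i = 0 then 1 else 0) (fun _ => 1)
    (by intro i; by_cases h : i = 0 <;> simp [h])
  have h1 : ∑ m ∈ range n, (fun i => if i = 0 then (1:ℝ) else 0) m • a m = a 0 := by
    rw [Finset.sum_eq_single 0]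
    · simp
    · intro b _ hb; simp [hb]
    · intro h0; exact absurd (Finset.mem_range.mpr (Nat.pos_of_ne_zero hn)) h0
  rw [h1, ha 0] at h
  simpa using h

theorem lam_mono (ha : ∀ n, ‖a n‖ = 1)
    (hblock : ∀ b : ℕ → X, IsNormalizedBlockSeq a b →
      ∀ (k : ℕ) (c : ℕ → ℝ),
        ‖∑ m ∈ Finset.range k, c m • b m‖ = ‖∑ m ∈ Finset.range k, c m • a m‖)
    {m n : ℕ} (hmn : m ≤ n) : ‖∑ i ∈ range m, a i‖ ≤ ‖∑ i ∈ range n, a i‖ := by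
  classical
  have h := mono_norm ha hblock n (fun i => if i < m then 1 else 0) (fun _ => 1)
    (by intro i; by_cases h : i < m <;> simp [h])
  have h1 : ∑ m' ∈ range n, (fun i => if i < m then (1:ℝ) else 0) m' • a m'
      = ∑ i ∈ range m, a i := by
    rw [← Finset.sum_subset (Finset.range_subset_range.mpr hmn)]
    · refine Finset.sum_congr rfl fun i hi => ?_
      simp [Finset.mem_range.mp hi]
    · intro x _ hx
      have : ¬ x < m := by simpa [Finset.mem_range] using hx
      simp [this]
  rw [h1] at h
  simpa using h

theorem lam_le (ha : ∀ n, ‖a n‖ = 1) (n : ℕ) : ‖∑ i ∈ range n, a i‖ ≤ n := by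
  calc ‖∑ i ∈ range n, a i‖ ≤ ∑ i ∈ range n, ‖a i‖ := norm_sum_le _ _
    _ = n := by simp [ha]

theorem lam_mul (ha : ∀ n, ‖a n‖ = 1)
    (hblock : ∀ b : ℕ → X, IsNormalizedBlockSeq a b →
      ∀ (k : ℕ) (c : ℕ → ℝ),
        ‖∑ m ∈ Finset.range k, c m • b m‖ = ‖∑ m ∈ Finset.range k, c m • a m‖)
    (m n : ℕ) (hn : n ≠ 0) :
    ‖∑ j ∈ range (m * n), a j‖ = ‖∑ i ∈ range n, a i‖ * ‖∑ i ∈ range m, a i‖ := by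
  set L : ℝ := ‖∑ i ∈ range n, a i‖ with hL
  have hLpos : 0 < L := lt_of_lt_of_le one_pos (one_le_lam ha hblock n hn)
  have hshift : ∀ t : ℕ, ‖∑ i ∈ range n, a (t + i)‖ = L := by
    intro t
    have := shift_inv ha hblock t n (fun _ => 1)
    simpa using this
  have h := block_finite ha hblock m (fun m' => m' * n) (fun _ => n) (fun _ _ => L⁻¹)
    (by intro m' _; exact le_of_eq (Nat.succ_mul m' n).symm)
    (by intro m' _
        have : ∑ i ∈ range n, L⁻¹ • a (m' * n + i) = L⁻¹ • ∑ i ∈ range n, a (m' * n + i) := by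
          rw [Finset.smul_sum]
        rw [this, norm_smul, Real.norm_eq_abs, abs_of_pos (inv_pos.mpr hLpos), hshift]
        field_simp)
    (fun _ => L)
  have hlhs : ∑ m' ∈ range m, L • ∑ i ∈ range n, L⁻¹ • a (m' * n + i)
      = ∑ j ∈ range (m * n), a j := by
    rw [← sum_grid (fun j => a j) m n]
    refine Finset.sum_congr rfl fun m' _ => ?_
    rw [Finset.smul_sum]
    refine Finset.sum_congr rfl fun i _ => ?_
    rw [smul_smul]
    rw [mul_inv_cancel₀ (ne_of_gt hLpos), one_smul]
  rw [hlhs] at h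
  rw [h]
  have : ∑ m' ∈ range m, L • a m' = L • ∑ m' ∈ range m, a m' := by rw [Finset.smul_sum]
  rw [this, norm_smul, Real.norm_eq_abs, abs_of_pos hLpos]
end Dev3

section Dev4

theorem mult_mono_pow (f : ℕ → ℝ) (hf1 : ∀ n, n ≠ 0 → 1 ≤ f n)
    (hmul : ∀ m n, n ≠ 0 → f (m * n) = f n * f m)
    (hmono : ∀ {m n : ℕ}, m ≤ n → f m ≤ f n) :
    ∀ n, n ≠ 0 → f n = (n : ℝ) ^ (Real.log (f 2) / Real.log 2) := by
  have hT : (0:ℝ) < Real.log 2 := Real.log_pos (by norm_num)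
  have hf2 : 1 ≤ f 2 := hf1 2 (by norm_num)
  have hL : 0 ≤ Real.log (f 2) := Real.log_nonneg hf2
  set L := Real.log (f 2) with hLdef
  set T := Real.log 2 with hTdef
  have hfone : f 1 = 1 := by
    have h := hmul 1 1 (by norm_num)
    have h1 := hf1 1 (by norm_num)
    nlinarith
  have hpow : ∀ (n j : ℕ), n ≠ 0 → f (n ^ j) = (f n) ^ j := by
    intro n j hn
    induction j with
    | zero => simpa using hfone
    | succ j ih =>
      rw [pow_succ, hmul _ n hn, ih, pow_succ, mul_comm]
  intro n hn
  rcases eq_or_lt_of_le (Nat.one_le_iff_ne_zero.mpr hn) with h1 | h1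
  · rw [← h1]; simp [hfone]
  -- n ≥ 2
  have hfn : 1 ≤ f n := hf1 n hn
  have hA : 0 ≤ Real.log (f n) := Real.log_nonneg hfn
  set A := Real.log (f n) with hAdef
  set B := Real.log n with hBdef
  have hB : 0 ≤ B := Real.log_nonneg (by exact_mod_cast h1.le)
  -- key bound for each j ≥ 1
  have key : ∀ j : ℕ, j ≠ 0 → |(j : ℝ) * (A * T - B * L)| ≤ L * T := by
    intro j hj
    set i := Nat.log 2 (n ^ j) with hi
    have hnj : n ^ j ≠ 0 := pow_ne_zero _ hn
    have h2i : 2 ^ i ≤ n ^ j := Nat.pow_log_le_self 2 hnj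
    have h2i' : n ^ j < 2 ^ (i + 1) := Nat.lt_pow_succ_log_self (by norm_num) _
    -- translate to f inequalities
    have hfle : f 2 ^ i ≤ f n ^ j := by
      rw [← hpow 2 i (by norm_num), ← hpow n j hn]
      exact hmono h2i
    have hfle' : f n ^ j ≤ f 2 ^ (i + 1) := by
      rw [← hpow 2 (i+1) (by norm_num), ← hpow n j hn]
      exact hmono h2i'.le
    have hf2pos : (0:ℝ) < f 2 := lt_of_lt_of_le one_pos hf2
    have hfnpos : (0:ℝ) < f n := lt_of_lt_of_le one_pos hfn
    -- log inequalities
    have l1 : (i : ℝ) * L ≤ (j : ℝ) * A := by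
      have := Real.log_le_log (by positivity) hfle
      rwa [Real.log_pow, Real.log_pow] at this
    have l2 : (j : ℝ) * A ≤ ((i : ℝ) + 1) * L := by
      have := Real.log_le_log (by positivity) hfle'
      rwa [Real.log_pow, Real.log_pow, Nat.cast_add, Nat.cast_one] at this
    have l3 : (i : ℝ) * T ≤ (j : ℝ) * B := by
      have : ((2:ℕ):ℝ) ^ i ≤ ((n:ℕ):ℝ) ^ j := by exact_mod_cast h2i
      have := Real.log_le_log (by positivity) this
      rwa [Real.log_pow, Real.log_pow] at this
    have l4 : (j : ℝ) * B ≤ ((i : ℝ) + 1) * T := by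
      have hc : ((n:ℕ):ℝ) ^ j ≤ ((2:ℕ):ℝ) ^ (i+1) := by exact_mod_cast h2i'.le
      have := Real.log_le_log (by positivity) hc
      rwa [Real.log_pow, Real.log_pow, Nat.cast_add, Nat.cast_one] at this
    rw [abs_le]
    constructor
    · nlinarith [mul_le_mul_of_nonneg_right l1 hT.le, mul_le_mul_of_nonneg_right l4 hL]
    · nlinarith [mul_le_mul_of_nonneg_right l2 hT.le, mul_le_mul_of_nonneg_right l3 hL]
  -- conclude A * T = B * L
  have hATBL : A * T - B * L = 0 := by
    by_contra hne
    obtain ⟨j, hj⟩ := exists_nat_gt (L * T / |A * T - B * L|)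
    have habs : 0 < |A * T - B * L| := abs_pos.mpr hne
    have hj0 : j ≠ 0 := by
      rintro rfl
      have h0 : (0:ℝ) ≤ L * T / |A * T - B * L| := by positivity
      rw [Nat.cast_zero] at hj
      linarith
    have hkey := key j hj0
    rw [abs_mul, Nat.abs_cast] at hkey
    have hle : (j:ℝ) ≤ L * T / |A * T - B * L| := by
      rw [le_div_iff₀ habs]; exact hkey
    linarith
  have hAeq : A = B * (L / T) := by
    field_simp
    linarith [hATBL]
  calc f n = Real.exp A := (Real.exp_log (lt_of_lt_of_le one_pos hfn)).symm
    _ = Real.exp (B * (L / T)) := by rw [hAeq]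
    _ = (n:ℝ) ^ (L / T) := by
        rw [Real.rpow_def_of_pos (by exact_mod_cast Nat.pos_of_ne_zero hn)]
end Dev4

section Dev5
variable {X : Type*} [NormedAddCommGroup X] [NormedSpace ℝ X]
variable {a : ℕ → X}

theorem sum_concat {M : Type*} [AddCommMonoid M] (g : ℕ → M) (m : ℕ → ℕ) (k : ℕ) :
    ∑ i ∈ range k, ∑ t ∈ range (m i), g ((∑ t' ∈ range i, m t') + t)
      = ∑ j ∈ range (∑ i ∈ range k, m i), g j := by
  induction k with
  | zero => simp
  | succ k ih =>
    rw [Finset.sum_range_succ, ih, Finset.sum_range_succ (f := m), Finset.sum_range_add]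

theorem norm_group (ha : ∀ n, ‖a n‖ = 1)
    (hblock : ∀ b : ℕ → X, IsNormalizedBlockSeq a b →
      ∀ (k : ℕ) (c : ℕ → ℝ),
        ‖∑ m ∈ Finset.range k, c m • b m‖ = ‖∑ m ∈ Finset.range k, c m • a m‖)
    (k : ℕ) (m : ℕ → ℕ) (hm : ∀ i, m i ≠ 0) :
    ‖∑ i ∈ range k, ‖∑ t ∈ range (m i), a t‖ • a i‖
      = ‖∑ j ∈ range (∑ i ∈ range k, m i), a j‖ := by
  set f : ℕ → ℝ := fun q => ‖∑ t ∈ range q, a t‖ with hfdef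
  have hfpos : ∀ q, q ≠ 0 → 0 < f q := fun q hq =>
    lt_of_lt_of_le one_pos (one_le_lam ha hblock q hq)
  have hshift : ∀ (t q : ℕ), ‖∑ i ∈ range q, a (t + i)‖ = f q := by
    intro t q
    have := shift_inv ha hblock t q (fun _ => 1)
    simpa using this
  have h := block_finite ha hblock k (fun i => ∑ t' ∈ range i, m t') m
    (fun i _ => (f (m i))⁻¹)
    (by intro i _; exact le_of_eq (Finset.sum_range_succ m i).symm)
    (by intro i _
        rw [← Finset.smul_sum, norm_smul, Real.norm_eq_abs,
          abs_of_pos (inv_pos.mpr (hfpos (m i) (hm i))), hshift]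
        exact inv_mul_cancel₀ (ne_of_gt (hfpos (m i) (hm i))))
    (fun i => f (m i))
  have hlhs : ∑ i ∈ range k, f (m i) • ∑ t ∈ range (m i), (f (m i))⁻¹ • a ((∑ t' ∈ range i, m t') + t)
      = ∑ j ∈ range (∑ i ∈ range k, m i), a j := by
    rw [← sum_concat (fun j => a j) m k]
    refine Finset.sum_congr rfl fun i _ => ?_
    rw [Finset.smul_sum]
    refine Finset.sum_congr rfl fun t _ => ?_
    rw [smul_smul, mul_inv_cancel₀ (ne_of_gt (hfpos (m i) (hm i))), one_smul]
  rw [hlhs] at h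
  exact h.symm
end Dev5

section Dev6
variable {X : Type*} [NormedAddCommGroup X] [NormedSpace ℝ X]
variable {a : ℕ → X}

theorem abs_coeff (ha : ∀ n, ‖a n‖ = 1)
    (hblock : ∀ b : ℕ → X, IsNormalizedBlockSeq a b →
      ∀ (k : ℕ) (c : ℕ → ℝ),
        ‖∑ m ∈ Finset.range k, c m • b m‖ = ‖∑ m ∈ Finset.range k, c m • a m‖)
    (K : ℕ) (r : ℕ → ℝ) :
    ‖∑ i ∈ range K, r i • a i‖ = ‖∑ i ∈ range K, |r i| • a i‖ := by
  classical
  have h := sign_inv ha hblock K (fun i => if r i < 0 then -1 else 1)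
    (by intro m; by_cases h : r m < 0 <;> simp [h]) (fun i => |r i|)
  rw [← h]
  congr 1
  refine Finset.sum_congr rfl fun i _ => ?_
  by_cases h : r i < 0
  · simp only [if_pos h, abs_of_neg h]; ring_nf
  · simp only [if_neg h, abs_of_nonneg (not_lt.mp h)]; ring_nf

theorem stmt_1' {X : Type*} [NormedAddCommGroup X] [NormedSpace ℝ X] [CompleteSpace X]
    (a : ℕ → X) (ha : ∀ n, ‖a n‖ = 1)
    (hblock : ∀ b : ℕ → X, IsNormalizedBlockSeq a b →
      ∀ (k : ℕ) (c : ℕ → ℝ),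
        ‖∑ m ∈ Finset.range k, c m • b m‖ = ‖∑ m ∈ Finset.range k, c m • a m‖) :
    (∃ p : ℝ, 1 ≤ p ∧ IsometricLpBasis p a) ∨ IsometricC0Basis a := by
  classical
  set f : ℕ → ℝ := fun n => ‖∑ i ∈ range n, a i‖ with hfdef
  have hf1 : ∀ n, n ≠ 0 → 1 ≤ f n := fun n hn => one_le_lam ha hblock n hn
  have hfmul : ∀ m n, n ≠ 0 → f (m * n) = f n * f m := fun m n hn => lam_mul ha hblock m n hn
  have hfmono : ∀ {m n : ℕ}, m ≤ n → f m ≤ f n := fun h => lam_mono ha hblock h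
  have hfpow := mult_mono_pow f hf1 hfmul hfmono
  set cst : ℝ := Real.log (f 2) / Real.log 2 with hcstdef
  have hT : (0:ℝ) < Real.log 2 := Real.log_pos (by norm_num)
  have hcst0 : 0 ≤ cst := div_nonneg (Real.log_nonneg (hf1 2 (by norm_num))) hT.le
  have hf2le : f 2 ≤ 2 := by simpa using lam_le ha 2
  have hcst1 : cst ≤ 1 := by
    rw [hcstdef, div_le_one hT]
    exact Real.log_le_log (lt_of_lt_of_le one_pos (hf1 2 (by norm_num))) hf2le
  by_cases hc0 : f 2 = 1
  · -- c₀ case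
    right
    have hfn1 : ∀ n, n ≠ 0 → f n = 1 := by
      intro n hn
      rw [hfpow n hn, hcstdef, hc0, Real.log_one, zero_div, Real.rpow_zero]
    intro k hk r
    have hkmem : 0 ∈ range k := Finset.mem_range.mpr (Nat.pos_of_ne_zero hk)
    set ne : (range k).Nonempty := Finset.nonempty_range_iff.mpr hk with hne
    set M : ℝ := (range k).sup' ne (fun i => |r i|) with hM
    have hM0 : 0 ≤ M := le_trans (abs_nonneg (r 0)) (Finset.le_sup' (fun i => |r i|) hkmem)
    have hupper : ‖∑ i ∈ range k, r i • a i‖ ≤ M := by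
      have h := mono_norm ha hblock k (fun i => if i < k then r i else 0) (fun _ => M)
        (by intro i
            by_cases hik : i < k
            · simp only [if_pos hik]
              rw [abs_of_nonneg hM0]
              exact Finset.le_sup' (fun i => |r i|) (Finset.mem_range.mpr hik)
            · simp [hik, abs_nonneg, hM0, abs_of_nonneg hM0])
      have h1 : ∑ i ∈ range k, (fun i => if i < k then r i else 0) i • a i
          = ∑ i ∈ range k, r i • a i := by
        refine Finset.sum_congr rfl fun i hi => ?_
        simp [Finset.mem_range.mp hi]
      have h2 : ∑ i ∈ range k, (fun _ => M) i • a i = M • ∑ i ∈ range k, a i := by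
        rw [Finset.smul_sum]
      rw [h1, h2, norm_smul, Real.norm_eq_abs, abs_of_nonneg hM0] at h
      have : ‖∑ i ∈ range k, a i‖ = 1 := hfn1 k hk
      rw [this, mul_one] at h
      exact h
    have hlower : M ≤ ‖∑ i ∈ range k, r i • a i‖ := by
      refine Finset.sup'_le ne _ fun j hj => ?_
      have hjk : j < k := Finset.mem_range.mp hj
      have h := mono_norm ha hblock k (fun i => if i = j then r j else 0)
        (fun i => if i < k then r i else 0)
        (by intro i
            by_cases hij : i = j
            · subst hij; simp [hjk]
            · simp [hij, abs_nonneg])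
      have h1 : ∑ i ∈ range k, (fun i => if i = j then r j else 0) i • a i = r j • a j := by
        rw [Finset.sum_eq_single j]
        · simp
        · intro b _ hb; simp [hb]
        · intro h0; exact absurd hj h0
      have h2 : ∑ i ∈ range k, (fun i => if i < k then r i else 0) i • a i
          = ∑ i ∈ range k, r i • a i := by
        refine Finset.sum_congr rfl fun i hi => ?_
        simp [Finset.mem_range.mp hi]
      rw [h1, h2, norm_smul, Real.norm_eq_abs, ha j, mul_one] at h
      exact h
    exact le_antisymm hupper hlower
  · -- ℓ_p case
    left
    have hf2 : 1 < f 2 := lt_of_le_of_ne (hf1 2 (by norm_num)) (Ne.symm hc0)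
    have hcstpos : 0 < cst := div_pos (Real.log_pos hf2) hT
    refine ⟨cst⁻¹, ?_, ?_⟩
    · rw [le_inv_comm₀ one_pos hcstpos]
      simpa using hcst1
    -- rational points lemma
    have hrat : ∀ (K : ℕ) (m : ℕ → ℕ) (N : ℕ), (∀ i, m i ≠ 0) → N ≠ 0 →
        ‖∑ i ∈ range K, ((m i : ℝ) / N) ^ cst • a i‖
          = ((∑ i ∈ range K, (m i : ℝ)) / N) ^ cst := by
      intro K m N hm hN
      have hNpos : (0:ℝ) < N := by exact_mod_cast Nat.pos_of_ne_zero hN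
      have hNc : (0:ℝ) < (N:ℝ) ^ cst := Real.rpow_pos_of_pos hNpos _
      have hcoef : ∀ i, ((m i : ℝ) / N) ^ cst = ((N:ℝ) ^ cst)⁻¹ * (m i : ℝ) ^ cst := by
        intro i
        rw [Real.div_rpow (Nat.cast_nonneg _) hNpos.le]
        ring
      have h1 : ∑ i ∈ range K, ((m i : ℝ) / N) ^ cst • a i
          = ((N:ℝ) ^ cst)⁻¹ • ∑ i ∈ range K, (m i : ℝ) ^ cst • a i := by
        rw [Finset.smul_sum]
        refine Finset.sum_congr rfl fun i _ => ?_
        rw [hcoef i, smul_smul]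
      have h2 : ∀ i, (m i : ℝ) ^ cst = f (m i) := fun i => (hfpow (m i) (hm i)).symm
      have h3 : ‖∑ i ∈ range K, (m i : ℝ) ^ cst • a i‖ = (∑ i ∈ range K, (m i : ℝ)) ^ cst := by
        have := norm_group ha hblock K m hm
        rcases Nat.eq_zero_or_pos K with hK | hK
        · subst hK; simp [Real.zero_rpow (ne_of_gt hcstpos)]
        · have hsum0 : ∑ i ∈ range K, m i ≠ 0 := by
            have : m 0 ≤ ∑ i ∈ range K, m i :=
              Finset.single_le_sum (f := m) (fun i _ => Nat.zero_le _)
                (Finset.mem_range.mpr hK)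
            have := hm 0
            omega
          calc ‖∑ i ∈ range K, (m i : ℝ) ^ cst • a i‖
              = ‖∑ i ∈ range K, f (m i) • a i‖ := by
                congr 1; exact Finset.sum_congr rfl fun i _ => by rw [h2 i]
            _ = f (∑ i ∈ range K, m i) := norm_group ha hblock K m hm
            _ = ((∑ i ∈ range K, m i : ℕ) : ℝ) ^ cst := hfpow _ hsum0
            _ = (∑ i ∈ range K, (m i : ℝ)) ^ cst := by rw [Nat.cast_sum]
      rw [h1, norm_smul, Real.norm_eq_abs, abs_of_pos (inv_pos.mpr hNc), h3,
        Real.div_rpow (Finset.sum_nonneg fun i _ => Nat.cast_nonneg _) hNpos.le]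
      ring
    -- main statement for nonnegative coefficients
    have hmain : ∀ (K : ℕ) (r : ℕ → ℝ), (∀ i, 0 ≤ r i) →
        ‖∑ i ∈ range K, r i • a i‖ = (∑ i ∈ range K, r i ^ cst⁻¹) ^ cst := by
      intro K r hr
      set p : ℝ := cst⁻¹ with hp
      set m : ℕ → ℕ → ℕ := fun N i => ⌊r i ^ p * N⌋₊ + 1 with hmdef
      have hm : ∀ N i, m N i ≠ 0 := fun N i => Nat.succ_ne_zero _
      set s : ℕ → ℕ → ℝ := fun N i => ((m N i : ℝ) / N) ^ cst with hsdef
      -- coordinatewise limits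
      have hlim1 : ∀ i, Filter.Tendsto (fun N : ℕ => (m N i : ℝ) / N)
          Filter.atTop (nhds (r i ^ p)) := by
        intro i
        have hub : Filter.Tendsto (fun N : ℕ => r i ^ p + 1 / N)
            Filter.atTop (nhds (r i ^ p)) := by
          have : Filter.Tendsto (fun n : ℕ => 1 / (n : ℝ)) Filter.atTop (nhds 0) :=
            tendsto_one_div_atTop_nhds_zero_nat
          simpa using Filter.Tendsto.add (tendsto_const_nhds (x := r i ^ p)) this
        refine tendsto_of_tendsto_of_tendsto_of_le_of_le' tendsto_const_nhds hub ?_ ?_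
        · filter_upwards [Filter.eventually_ge_atTop 1] with N hN
          have hNpos : (0:ℝ) < N := by exact_mod_cast hN
          rw [le_div_iff₀ hNpos]
          have hcast : ((m N i : ℕ) : ℝ) = (⌊r i ^ p * N⌋₊ : ℝ) + 1 := by simp [hmdef]
          rw [hcast]
          exact (Nat.lt_floor_add_one _).le
        · filter_upwards [Filter.eventually_ge_atTop 1] with N hN
          have hNpos : (0:ℝ) < N := by exact_mod_cast hN
          rw [div_le_iff₀ hNpos]
          have h1 : (⌊r i ^ p * N⌋₊ : ℝ) ≤ r i ^ p * N :=
            Nat.floor_le (mul_nonneg (Real.rpow_nonneg (hr i) p) (Nat.cast_nonneg N))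
          have : ((m N i : ℕ) : ℝ) = (⌊r i ^ p * N⌋₊ : ℝ) + 1 := by
            simp [hmdef]
          rw [this]
          calc (⌊r i ^ p * N⌋₊ : ℝ) + 1 ≤ r i ^ p * N + 1 := by linarith
            _ = (r i ^ p + 1/N) * N := by field_simp
      have hlim2 : ∀ i, Filter.Tendsto (fun N : ℕ => s N i)
          Filter.atTop (nhds (r i)) := by
        intro i
        have hc : ContinuousAt (fun x : ℝ => x ^ cst) (r i ^ p) :=
          Real.continuousAt_rpow_const _ _ (Or.inr hcst0)
        have := hc.tendsto.comp (hlim1 i)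
        have heq : (r i ^ p) ^ cst = r i := by
          rw [← Real.rpow_mul (hr i), hp, inv_mul_cancel₀ (ne_of_gt hcstpos),
            Real.rpow_one]
        rw [heq] at this
        exact this
      -- LHS tendsto
      have hFcont : Continuous (fun v : ℕ → ℝ => ‖∑ i ∈ range K, v i • a i‖) := by
        refine Continuous.norm ?_
        exact continuous_finset_sum _ fun i _ => (continuous_apply i).smul continuous_const
      have hLHS : Filter.Tendsto (fun N => ‖∑ i ∈ range K, s N i • a i‖)
          Filter.atTop (nhds ‖∑ i ∈ range K, r i • a i‖) := by
        have hpi : Filter.Tendsto (fun N => s N) Filter.atTop (nhds r) :=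
          tendsto_pi_nhds.mpr hlim2
        exact (hFcont.tendsto r).comp hpi
      -- RHS tendsto
      have hRHS : Filter.Tendsto (fun N => (∑ i ∈ range K, (m N i : ℝ) / N) ^ cst)
          Filter.atTop (nhds ((∑ i ∈ range K, r i ^ p) ^ cst)) := by
        have hsum : Filter.Tendsto (fun N => ∑ i ∈ range K, (m N i : ℝ) / N)
            Filter.atTop (nhds (∑ i ∈ range K, r i ^ p)) :=
          tendsto_finset_sum _ fun i _ => hlim1 i
        have hc : ContinuousAt (fun x : ℝ => x ^ cst) (∑ i ∈ range K, r i ^ p) :=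
          Real.continuousAt_rpow_const _ _ (Or.inr hcst0)
        exact hc.tendsto.comp hsum
      -- the two sequences agree eventually
      have heq : ∀ᶠ N in Filter.atTop, ‖∑ i ∈ range K, s N i • a i‖
          = (∑ i ∈ range K, (m N i : ℝ) / N) ^ cst := by
        filter_upwards [Filter.eventually_ge_atTop 1] with N hN
        have hN0 : N ≠ 0 := by omega
        rw [hsdef]
        have := hrat K (m N) N (hm N) hN0
        rw [this, Finset.sum_div]
      exact tendsto_nhds_unique hLHS (hRHS.congr' (heq.mono fun N h => h.symm))
    -- conclude
    intro K r
    have h1 : ‖∑ i ∈ range K, r i • a i‖ = ‖∑ i ∈ range K, |r i| • a i‖ :=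
      abs_coeff ha hblock K r
    have h2 := hmain K (fun i => |r i|) (fun i => abs_nonneg _)
    rw [h1, h2, one_div, inv_inv]
end Dev6


/-- Bohnenblust's characterization: a normalized sequence all of whose normalized block
sequences are isometrically equivalent to it is isometric to the standard basis of some
`ℓ_p` (`1 ≤ p < ∞`) or of `c₀`. -/
theorem stmt_1 {X : Type*} [NormedAddCommGroup X] [NormedSpace ℝ X] [CompleteSpace X]
    (a : ℕ → X) (ha : ∀ n, ‖a n‖ = 1)
    (hblock : ∀ b : ℕ → X, IsNormalizedBlockSeq a b →
      ∀ (k : ℕ) (c : ℕ → ℝ),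
        ‖∑ m ∈ Finset.range k, c m • b m‖ = ‖∑ m ∈ Finset.range k, c m • a m‖) :
    (∃ p : ℝ, 1 ≤ p ∧ IsometricLpBasis p a) ∨ IsometricC0Basis a := by
  exact stmt_1' a ha hblock
end

section
/- Let X be a real Banach space and (a_n)_{n<ω} a normalized sequence in X such that every sequence (b_m)_{m<ω} of normalized blocks of (a_n) is isometrically equivalent to (a_n), i.e., for every such (b_m), every k < ω, and every c ∈ ℝ^k, ‖Σ_{m<k} c_m b_m‖ = ‖Σ_{m<k} c_m a_m‖. If the norms of the partial sums are bounded, i.e., sup_{n<ω} ‖a_0 + a_1 + ⋯ + a_{n-1}‖ < ∞, then (a_n) is isometric to the standard basis of c_0; in particular ‖a_0 + ⋯ + a_{n-1}‖ = 1 for every n ≥ 1. -/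
open Finset

set_option linter.unusedSectionVars false

section Aux
variable {X : Type*} [NormedAddCommGroup X] [NormedSpace ℝ X] {a : ℕ → X}

/-- Master lemma: spreading plus sign changes preserve norms of linear combinations. -/
lemma msl (ha : ∀ n, ‖a n‖ = 1)
    (hblock : ∀ b : ℕ → X, IsNormalizedBlockSeq a b → ∀ (k : ℕ) (c : ℕ → ℝ),
      ‖∑ m ∈ Finset.range k, c m • b m‖ = ‖∑ m ∈ Finset.range k, c m • a m‖)
    (j : ℕ → ℕ) (hj : StrictMono j) (ε : ℕ → ℝ) (hε : ∀ m, |ε m| = 1)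
    (k : ℕ) (c : ℕ → ℝ) :
    ‖∑ m ∈ Finset.range k, c m • ε m • a (j m)‖ = ‖∑ m ∈ Finset.range k, c m • a m‖ := by
  refine hblock (fun m => ε m • a (j m))
    ⟨j, (fun _ => 1), (fun m _ => ε m), fun m => ?_, fun m => ?_, fun m => ?_⟩ k c
  · simp
  · simp only [norm_smul, ha, Real.norm_eq_abs, hε, mul_one]
  · exact hj (Nat.lt_succ_self m)

lemma spread (ha : ∀ n, ‖a n‖ = 1)
    (hblock : ∀ b : ℕ → X, IsNormalizedBlockSeq a b → ∀ (k : ℕ) (c : ℕ → ℝ),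
      ‖∑ m ∈ Finset.range k, c m • b m‖ = ‖∑ m ∈ Finset.range k, c m • a m‖)
    (j : ℕ → ℕ) (hj : StrictMono j) (k : ℕ) (c : ℕ → ℝ) :
    ‖∑ m ∈ Finset.range k, c m • a (j m)‖ = ‖∑ m ∈ Finset.range k, c m • a m‖ := by
  have := msl ha hblock j hj (fun _ => 1) (fun _ => by norm_num) k c
  simpa using this

lemma uncond (ha : ∀ n, ‖a n‖ = 1)
    (hblock : ∀ b : ℕ → X, IsNormalizedBlockSeq a b → ∀ (k : ℕ) (c : ℕ → ℝ),
      ‖∑ m ∈ Finset.range k, c m • b m‖ = ‖∑ m ∈ Finset.range k, c m • a m‖)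
    (ε : ℕ → ℝ) (hε : ∀ m, |ε m| = 1) (k : ℕ) (c : ℕ → ℝ) :
    ‖∑ m ∈ Finset.range k, (ε m * c m) • a m‖ = ‖∑ m ∈ Finset.range k, c m • a m‖ := by
  have := msl ha hblock id strictMono_id ε hε k c
  simpa [smul_smul, mul_comm] using this

lemma sum_range_mul_aux (f : ℕ → X) (n : ℕ) :
    ∀ K, ∑ i ∈ Finset.range (K * n), f i
      = ∑ m ∈ Finset.range K, ∑ i ∈ Finset.range n, f (m * n + i) := by
  intro K
  induction K with
  | zero => simp
  | succ K ih =>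
    rw [Finset.sum_range_succ, ← ih, Nat.succ_mul, Finset.sum_range_add]

lemma mult (ha : ∀ n, ‖a n‖ = 1)
    (hblock : ∀ b : ℕ → X, IsNormalizedBlockSeq a b → ∀ (k : ℕ) (c : ℕ → ℝ),
      ‖∑ m ∈ Finset.range k, c m • b m‖ = ‖∑ m ∈ Finset.range k, c m • a m‖)
    (n K : ℕ) (hn : 0 < ‖∑ i ∈ Finset.range n, a i‖) :
    ‖∑ i ∈ Finset.range (K * n), a i‖
      = ‖∑ i ∈ Finset.range n, a i‖ * ‖∑ i ∈ Finset.range K, a i‖ := by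
  set T := ‖∑ i ∈ Finset.range n, a i‖ with hT
  have hTn : ∀ m : ℕ, ‖∑ i ∈ Finset.range n, a (m * n + i)‖ = T := by
    intro m
    have := spread ha hblock (fun i => m * n + i)
      (fun x y h => by simpa using h) n (fun _ => 1)
    simpa using this
  have key := hblock (fun m => T⁻¹ • ∑ i ∈ Finset.range n, a (m * n + i))
    ⟨(fun m => m * n), (fun _ => n), (fun _ _ => T⁻¹),
      fun m => by
        show T⁻¹ • ∑ i ∈ Finset.range n, a (m * n + i)
            = ∑ i ∈ Finset.range n, T⁻¹ • a (m * n + i)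
        rw [Finset.smul_sum],
      fun m => by
        rw [norm_smul, hTn m, Real.norm_eq_abs, abs_of_nonneg (inv_nonneg.2 hn.le),
          inv_mul_cancel₀ hn.ne'],
      fun m => by show m * n + n ≤ (m + 1) * n; rw [add_mul, one_mul]⟩ K (fun _ => T)
  have hL : ∑ m ∈ Finset.range K, T • T⁻¹ • ∑ i ∈ Finset.range n, a (m * n + i)
      = ∑ i ∈ Finset.range (K * n), a i := by
    rw [sum_range_mul_aux]
    refine Finset.sum_congr rfl fun m _ => ?_
    rw [smul_smul, mul_inv_cancel₀ hn.ne', one_smul]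
  rw [hL] at key
  rw [key, ← Finset.smul_sum, norm_smul, Real.norm_eq_abs, abs_of_nonneg hn.le]

lemma t2pos (ha : ∀ n, ‖a n‖ = 1)
    (hblock : ∀ b : ℕ → X, IsNormalizedBlockSeq a b → ∀ (k : ℕ) (c : ℕ → ℝ),
      ‖∑ m ∈ Finset.range k, c m • b m‖ = ‖∑ m ∈ Finset.range k, c m • a m‖)
    (hbd : BddAbove (Set.range fun n : ℕ => ‖∑ i ∈ Finset.range n, a i‖)) :
    0 < ‖∑ i ∈ Finset.range 2, a i‖ := by
  by_contra h
  push_neg at h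
  have h0 : (∑ i ∈ Finset.range 2, a i) = 0 :=
    norm_le_zero_iff.mp h
  obtain ⟨D, hD⟩ := hbd
  have hDn : ∀ K : ℕ, ‖∑ i ∈ Finset.range K, a i‖ ≤ D :=
    fun K => hD (Set.mem_range_self K)
  have hN : ∀ N : ℕ, 1 ≤ N → a N = - a 0 := by
    intro N hN1
    have hs := spread ha hblock (fun i => if i = 0 then 0 else N + i - 1)
      (strictMono_nat_of_lt_succ fun m => by by_cases hm : m = 0 <;> simp [hm] <;> omega)
      2 (fun _ => 1)
    simp only [Finset.sum_range_succ, Finset.sum_range_zero, one_smul, zero_add] at hs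
    norm_num at hs
    rw [show (∑ i ∈ Finset.range 2, a i) = a 0 + a 1 by
      simp [Finset.sum_range_succ]] at h0
    rw [h0, norm_zero, norm_eq_zero] at hs
    exact eq_neg_of_add_eq_zero_right hs
  obtain ⟨K, hK⟩ := exists_nat_gt D
  have hsp := spread ha hblock (fun m => 1 + m)
    (fun x y hxy => by simpa using hxy) K (fun _ => 1)
  have hval : (∑ m ∈ Finset.range K, (1:ℝ) • a (1 + m)) = (K : ℝ) • (- a 0) := by
    rw [Finset.sum_congr rfl fun m _ => by
      rw [one_smul, hN (1 + m) (by omega)]]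
    rw [Finset.sum_const, Finset.card_range, ← Nat.cast_smul_eq_nsmul ℝ]
  rw [hval] at hsp
  have : (K : ℝ) ≤ D := by
    have h1 : ‖(K : ℝ) • (- a 0)‖ = (K : ℝ) := by
      rw [norm_smul, norm_neg, ha 0, Real.norm_natCast, mul_one]
    calc (K : ℝ) = ‖∑ m ∈ Finset.range K, (1:ℝ) • a m‖ := by rw [← hsp, h1]
    _ ≤ D := by simpa using hDn K
  linarith

lemma tle1 (ha : ∀ n, ‖a n‖ = 1)
    (hblock : ∀ b : ℕ → X, IsNormalizedBlockSeq a b → ∀ (k : ℕ) (c : ℕ → ℝ),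
      ‖∑ m ∈ Finset.range k, c m • b m‖ = ‖∑ m ∈ Finset.range k, c m • a m‖)
    (hbd : BddAbove (Set.range fun n : ℕ => ‖∑ i ∈ Finset.range n, a i‖))
    (n : ℕ) (hn : 0 < ‖∑ i ∈ Finset.range n, a i‖) :
    ‖∑ i ∈ Finset.range n, a i‖ ≤ 1 := by
  by_contra hlt
  push_neg at hlt
  obtain ⟨D, hD⟩ := hbd
  have hDn : ∀ K : ℕ, ‖∑ i ∈ Finset.range K, a i‖ ≤ D :=
    fun K => hD (Set.mem_range_self K)
  have hpow : ∀ j : ℕ, ‖∑ i ∈ Finset.range (n ^ j), a i‖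
      = ‖∑ i ∈ Finset.range n, a i‖ ^ j := by
    intro j
    induction j with
    | zero => simp [ha 0]
    | succ j ih =>
      rw [pow_succ, mult ha hblock n (n ^ j) hn, ih, pow_succ]
      ring
  obtain ⟨j, hj⟩ := pow_unbounded_of_one_lt D hlt
  have := hDn (n ^ j)
  rw [hpow j] at this
  linarith

lemma t2ge1 (ha : ∀ n, ‖a n‖ = 1)
    (hblock : ∀ b : ℕ → X, IsNormalizedBlockSeq a b → ∀ (k : ℕ) (c : ℕ → ℝ),
      ‖∑ m ∈ Finset.range k, c m • b m‖ = ‖∑ m ∈ Finset.range k, c m • a m‖)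
    (hbd : BddAbove (Set.range fun n : ℕ => ‖∑ i ∈ Finset.range n, a i‖)) :
    1 ≤ ‖∑ i ∈ Finset.range 2, a i‖ := by
  have h2pos := t2pos ha hblock hbd
  have h1 : ‖∑ i ∈ Finset.range 4, (if i < 2 then (1:ℝ) else -1) • a i‖
      = ‖∑ i ∈ Finset.range 4, a i‖ := by
    have := uncond ha hblock (fun i => if i < 2 then (1:ℝ) else -1)
      (fun m => by by_cases h : m < 2 <;> simp [h]) 4 (fun _ => 1)
    simpa using this
  have h2 : ‖∑ i ∈ Finset.range 4, (if i % 2 = 0 then (1:ℝ) else -1) • a i‖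
      = ‖∑ i ∈ Finset.range 4, a i‖ := by
    have := uncond ha hblock (fun i => if i % 2 = 0 then (1:ℝ) else -1)
      (fun m => by by_cases h : m % 2 = 0 <;> simp [h]) 4 (fun _ => 1)
    simpa using this
  have h3 : ‖a 0 - a 3‖ = ‖∑ i ∈ Finset.range 2, a i‖ := by
    have := msl ha hblock (fun m => if m = 0 then 0 else m + 2)
      (strictMono_nat_of_lt_succ fun m => by by_cases hm : m = 0 <;> simp [hm])
      (fun m => if m = 0 then (1:ℝ) else -1)
      (fun m => by by_cases hm : m = 0 <;> simp [hm]) 2 (fun _ => 1)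
    simp only [Finset.sum_range_succ, Finset.sum_range_zero, zero_add, one_smul] at this
    norm_num at this
    rw [show a 0 - a 3 = a 0 + -a 3 by abel, this]
    simp [Finset.sum_range_succ]
  have hiden : (∑ i ∈ Finset.range 4, (if i < 2 then (1:ℝ) else -1) • a i)
      + (∑ i ∈ Finset.range 4, (if i % 2 = 0 then (1:ℝ) else -1) • a i)
      = (2:ℝ) • (a 0 - a 3) := by
    norm_num [Finset.sum_range_succ, two_smul]
    abel
  have tri := norm_add_le (∑ i ∈ Finset.range 4, (if i < 2 then (1:ℝ) else -1) • a i)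
    (∑ i ∈ Finset.range 4, (if i % 2 = 0 then (1:ℝ) else -1) • a i)
  rw [hiden, h1, h2, norm_smul] at tri
  have h4 : ‖∑ i ∈ Finset.range 4, a i‖
      = ‖∑ i ∈ Finset.range 2, a i‖ * ‖∑ i ∈ Finset.range 2, a i‖ := by
    have := mult ha hblock 2 2 h2pos
    norm_num at this
    exact this
  rw [h4, h3] at tri
  simp only [Real.norm_ofNat] at tri
  nlinarith

lemma tmono (ha : ∀ n, ‖a n‖ = 1)
    (hblock : ∀ b : ℕ → X, IsNormalizedBlockSeq a b → ∀ (k : ℕ) (c : ℕ → ℝ),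
      ‖∑ m ∈ Finset.range k, c m • b m‖ = ‖∑ m ∈ Finset.range k, c m • a m‖)
    (n : ℕ) (hn : 1 ≤ n) :
    ‖∑ i ∈ Finset.range (n+1), a i‖ ≤ ‖∑ i ∈ Finset.range (2*n), a i‖ := by
  have h2 : ‖∑ i ∈ Finset.range (2*n), (if i < n+1 then (1:ℝ) else -1) • a i‖
      = ‖∑ i ∈ Finset.range (2*n), a i‖ := by
    have := uncond ha hblock (fun i => if i < n+1 then (1:ℝ) else -1)
      (fun m => by by_cases h : m < n+1 <;> simp [h]) (2*n) (fun _ => 1)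
    simpa using this
  have hiden : (∑ i ∈ Finset.range (2*n), a i)
      + (∑ i ∈ Finset.range (2*n), (if i < n+1 then (1:ℝ) else -1) • a i)
      = (2:ℝ) • ∑ i ∈ Finset.range (n+1), a i := by
    rw [← Finset.sum_add_distrib]
    have h2n : 2*n = (n+1) + (n-1) := by omega
    rw [h2n, Finset.sum_range_add]
    have e1 : ∑ i ∈ Finset.range (n+1), (a i + (if i < n+1 then (1:ℝ) else -1) • a i)
        = ∑ i ∈ Finset.range (n+1), (2:ℝ) • a i := by
      refine Finset.sum_congr rfl fun i hi => ?_
      rw [if_pos (Finset.mem_range.mp hi), one_smul, two_smul]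
    have e2 : ∑ i ∈ Finset.range (n-1),
        (a (n+1+i) + (if n+1+i < n+1 then (1:ℝ) else -1) • a (n+1+i)) = 0 := by
      refine Finset.sum_eq_zero fun i hi => ?_
      rw [if_neg (by omega)]
      simp
    rw [e1, e2, add_zero, ← Finset.smul_sum]
  have tri := norm_add_le (∑ i ∈ Finset.range (2*n), a i)
    (∑ i ∈ Finset.range (2*n), (if i < n+1 then (1:ℝ) else -1) • a i)
  rw [hiden, h2, norm_smul] at tri
  simp only [Real.norm_ofNat] at tri
  linarith

lemma tn1 (ha : ∀ n, ‖a n‖ = 1)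
    (hblock : ∀ b : ℕ → X, IsNormalizedBlockSeq a b → ∀ (k : ℕ) (c : ℕ → ℝ),
      ‖∑ m ∈ Finset.range k, c m • b m‖ = ‖∑ m ∈ Finset.range k, c m • a m‖)
    (hbd : BddAbove (Set.range fun n : ℕ => ‖∑ i ∈ Finset.range n, a i‖)) :
    ∀ n : ℕ, 1 ≤ n → ‖∑ i ∈ Finset.range n, a i‖ = 1 := by
  have h2pos := t2pos ha hblock hbd
  have h2 : ‖∑ i ∈ Finset.range 2, a i‖ = 1 :=
    le_antisymm (tle1 ha hblock hbd 2 h2pos) (t2ge1 ha hblock hbd)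
  have hdouble : ∀ m : ℕ, ‖∑ i ∈ Finset.range (m*2), a i‖
      = ‖∑ i ∈ Finset.range m, a i‖ := by
    intro m; rw [mult ha hblock 2 m h2pos, h2, one_mul]
  have hstep : ∀ m : ℕ, 1 ≤ m → ‖∑ i ∈ Finset.range (m+1), a i‖
      ≤ ‖∑ i ∈ Finset.range m, a i‖ := by
    intro m hm
    have := tmono ha hblock m hm
    rwa [show 2*m = m*2 by ring, hdouble m] at this
  have hanti : ∀ m m' : ℕ, 1 ≤ m → m ≤ m' →
      ‖∑ i ∈ Finset.range m', a i‖ ≤ ‖∑ i ∈ Finset.range m, a i‖ := by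
    intro m m' hm h
    induction m', h using Nat.le_induction with
    | base => exact le_refl _
    | succ m' hmm ih => exact le_trans (hstep m' (le_trans hm hmm)) ih
  have hdy : ∀ k : ℕ, ‖∑ i ∈ Finset.range (2^k), a i‖ = 1 := by
    intro k
    induction k with
    | zero => simp [ha 0]
    | succ k ih => rw [pow_succ, hdouble (2^k)]; exact ih
  intro n hn
  have hle : 1 ≤ ‖∑ i ∈ Finset.range n, a i‖ := by
    rw [← hdy n]
    exact hanti n (2^n) hn (Nat.lt_two_pow_self (n := n)).le
  exact le_antisymm (tle1 ha hblock hbd n (by linarith)) hle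

lemma del (ha : ∀ n, ‖a n‖ = 1)
    (hblock : ∀ b : ℕ → X, IsNormalizedBlockSeq a b → ∀ (k : ℕ) (c : ℕ → ℝ),
      ‖∑ m ∈ Finset.range k, c m • b m‖ = ‖∑ m ∈ Finset.range k, c m • a m‖)
    (k j : ℕ) (hj : j < k) (c : ℕ → ℝ) (h0 : c j = 0) :
    ‖∑ i ∈ Finset.range k, c i • a i‖
      = ‖∑ i ∈ Finset.range (k-1), (if i < j then c i else c (i+1)) • a i‖ := by
  obtain ⟨q, rfl⟩ : ∃ q, k = j + (1 + q) := ⟨k - (j+1), by omega⟩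
  have hsp := spread ha hblock (fun i => if i < j then i else i + 1)
    (strictMono_nat_of_lt_succ fun m => by
      by_cases hm : m < j <;> by_cases hm1 : m + 1 < j <;> simp [hm, hm1] <;> omega)
    (j + (1 + q) - 1) (fun i => if i < j then c i else c (i+1))
  have hq1 : j + (1 + q) - 1 = j + q := by omega
  rw [hq1] at hsp
  have hL : ∑ i ∈ Finset.range (j + (1 + q)), c i • a i
      = (∑ i ∈ Finset.range j, c i • a i)
        + ∑ i ∈ Finset.range q, c (j+(1+i)) • a (j+(1+i)) := by
    rw [Finset.sum_range_add, Finset.sum_range_add]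
    simp [h0]
  have hR : ∑ i ∈ Finset.range (j + q),
        (if i < j then c i else c (i+1)) • a (if i < j then i else i + 1)
      = (∑ i ∈ Finset.range j, c i • a i)
        + ∑ i ∈ Finset.range q, c (j+(1+i)) • a (j+(1+i)) := by
    rw [Finset.sum_range_add]
    congr 1
    · refine Finset.sum_congr rfl fun i hi => ?_
      have hij := Finset.mem_range.mp hi
      rw [if_pos hij, if_pos hij]
    · refine Finset.sum_congr rfl fun i hi => ?_
      rw [if_neg (by omega), if_neg (by omega)]
      have harith : j + i + 1 = j + (1 + i) := by omega
      rw [harith]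
  rw [hL, ← hR, hsp, hq1]

lemma lower (ha : ∀ n, ‖a n‖ = 1)
    (hblock : ∀ b : ℕ → X, IsNormalizedBlockSeq a b → ∀ (k : ℕ) (c : ℕ → ℝ),
      ‖∑ m ∈ Finset.range k, c m • b m‖ = ‖∑ m ∈ Finset.range k, c m • a m‖)
    (k : ℕ) (r : ℕ → ℝ) (j : ℕ) (hj : j < k) :
    |r j| ≤ ‖∑ i ∈ Finset.range k, r i • a i‖ := by
  have hu := uncond ha hblock (fun i => if i = j then (1:ℝ) else -1)
    (fun m => by by_cases h : m = j <;> simp [h]) k r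
  have hline : (∑ i ∈ Finset.range k, r i • a i)
      + ∑ i ∈ Finset.range k, ((if i = j then (1:ℝ) else -1) * r i) • a i
      = (2 * r j) • a j := by
    rw [← Finset.sum_add_distrib]
    rw [Finset.sum_eq_single_of_mem j (Finset.mem_range.mpr hj)]
    · rw [if_pos rfl, ← add_smul]
      norm_num
      rw [two_mul, add_smul]
    · intro i hi hne
      rw [if_neg hne, ← add_smul]
      have : r i + (-1) * r i = 0 := by ring
      rw [this, zero_smul]
  have h2 : ‖(2 * r j) • a j‖ = 2 * |r j| := by
    rw [norm_smul, Real.norm_eq_abs, abs_mul, abs_two, ha j, mul_one]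
  have tri := norm_add_le (∑ i ∈ Finset.range k, r i • a i)
    (∑ i ∈ Finset.range k, ((if i = j then (1:ℝ) else -1) * r i) • a i)
  rw [hline, hu, h2] at tri
  linarith

lemma upper (ha : ∀ n, ‖a n‖ = 1)
    (hblock : ∀ b : ℕ → X, IsNormalizedBlockSeq a b → ∀ (k : ℕ) (c : ℕ → ℝ),
      ‖∑ m ∈ Finset.range k, c m • b m‖ = ‖∑ m ∈ Finset.range k, c m • a m‖)
    (hbd : BddAbove (Set.range fun n : ℕ => ‖∑ i ∈ Finset.range n, a i‖)) :
    ∀ k : ℕ, ∀ r : ℕ → ℝ, ∀ M : ℝ, 0 ≤ M → (∀ i, i < k → |r i| ≤ M) →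
      ‖∑ i ∈ Finset.range k, r i • a i‖ ≤ M := by
  intro k
  induction k using Nat.strong_induction_on with
  | _ k ih =>
    intro r M hM hr
    rcases Nat.eq_zero_or_pos k with rfl | hk
    · simpa using hM
    have hs : ∀ i, ((if r i < 0 then (-1:ℝ) else 1) * |r i|) = r i := fun i => by
      by_cases h : r i < 0
      · rw [if_pos h, abs_of_neg h]; ring
      · rw [if_neg h, abs_of_nonneg (not_lt.mp h), one_mul]
    have habs : ‖∑ i ∈ Finset.range k, r i • a i‖
        = ‖∑ i ∈ Finset.range k, |r i| • a i‖ := by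
      have hu := uncond ha hblock (fun i => if r i < 0 then (-1:ℝ) else 1)
        (fun m => by by_cases h : r m < 0 <;> simp [h]) k (fun i => |r i|)
      rw [← hu]
      congr 1
      exact Finset.sum_congr rfl fun i _ => by rw [hs i]
    rw [habs]
    obtain ⟨j, hjmem, hjmin⟩ := Finset.exists_min_image (Finset.range k)
      (fun i => |r i|) ⟨0, Finset.mem_range.mpr hk⟩
    have hjk := Finset.mem_range.mp hjmem
    have hm0 : 0 ≤ |r j| := abs_nonneg _
    have hmM : |r j| ≤ M := hr j hjk
    have hdec : ∑ i ∈ Finset.range k, |r i| • a i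
        = |r j| • (∑ i ∈ Finset.range k, a i)
          + ∑ i ∈ Finset.range k, (|r i| - |r j|) • a i := by
      rw [Finset.smul_sum, ← Finset.sum_add_distrib]
      refine Finset.sum_congr rfl fun i _ => ?_
      rw [← add_smul]
      congr 1
      ring
    have hdel := del ha hblock k j hjk (fun i => |r i| - |r j|) (by simp)
    have hbound : ‖∑ i ∈ Finset.range (k-1),
        (if i < j then |r i| - |r j| else |r (i+1)| - |r j|) • a i‖ ≤ M - |r j| := by
      refine ih (k-1) (by omega) _ (M - |r j|) (by linarith) fun i hik => ?_
      by_cases h : i < j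
      · rw [if_pos h, abs_of_nonneg
          (sub_nonneg.mpr (hjmin i (Finset.mem_range.mpr (by omega))))]
        have := hr i (by omega); linarith
      · rw [if_neg h, abs_of_nonneg
          (sub_nonneg.mpr (hjmin (i+1) (Finset.mem_range.mpr (by omega))))]
        have := hr (i+1) (by omega); linarith
    have h1 : ‖|r j| • (∑ i ∈ Finset.range k, a i)‖ = |r j| := by
      rw [norm_smul, Real.norm_eq_abs, abs_of_nonneg hm0,
        tn1 ha hblock hbd k hk, mul_one]
    have tri := norm_add_le (|r j| • (∑ i ∈ Finset.range k, a i))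
      (∑ i ∈ Finset.range k, (|r i| - |r j|) • a i)
    rw [← hdec, h1] at tri
    rw [hdel] at tri
    calc ‖∑ i ∈ Finset.range k, |r i| • a i‖
        ≤ |r j| + ‖∑ i ∈ Finset.range (k-1),
            (if i < j then |r i| - |r j| else |r (i+1)| - |r j|) • a i‖ := tri
      _ ≤ |r j| + (M - |r j|) := by linarith [hbound]
      _ = M := by ring

end Aux

/-- If the norms of the partial sums are bounded, the sequence is isometric to the standard
basis of `c₀`; in particular all partial sums have norm 1. -/
theorem stmt_3 {X : Type*} [NormedAddCommGroup X] [NormedSpace ℝ X] [CompleteSpace X]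
    (a : ℕ → X) (ha : ∀ n, ‖a n‖ = 1)
    (hblock : ∀ b : ℕ → X, IsNormalizedBlockSeq a b →
      ∀ (k : ℕ) (c : ℕ → ℝ),
        ‖∑ m ∈ Finset.range k, c m • b m‖ = ‖∑ m ∈ Finset.range k, c m • a m‖)
    (hbd : BddAbove (Set.range fun n : ℕ => ‖∑ i ∈ Finset.range n, a i‖)) :
    IsometricC0Basis a ∧ ∀ n : ℕ, 1 ≤ n → ‖∑ i ∈ Finset.range n, a i‖ = 1 := by
  constructor
  · intro k hk r
    have hne := Finset.nonempty_range_iff.mpr hk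
    refine le_antisymm ?_ (Finset.sup'_le hne _ fun i hi =>
      lower ha hblock k r i (Finset.mem_range.mp hi))
    refine upper ha hblock hbd k r _ ?_ fun i hik =>
      Finset.le_sup' (fun i => |r i|) (Finset.mem_range.mpr hik)
    obtain ⟨i0, hi0⟩ := hne
    exact le_trans (abs_nonneg (r i0)) (Finset.le_sup' (fun i => |r i|) hi0)
  · exact tn1 ha hblock hbd
end
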